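/- Let G be a finite simple graph with maximum degree at most Δ, let K be a clique of size Δ in G, and suppose there exist two distinct non-adjacent vertices u', v' outside K each having a neighbor in K. Let G₀ be obtained from G − V(K) by adding the edge u'v'. Then α(G) ≥ α(G₀) + 1. -/

import Mathlib

open SimpleGraph

/-- A finset is independent in `G` if no two distinct members are adjacent. -/
def IsIndepFinset {V : Type*} (G : SimpleGraph V) (s : Finset V) : Prop :=
  ∀ v ∈ s, ∀ w ∈ s, v ≠ w → ¬ G.Adj v w

/-- The independence number: the largest cardinality of an independent finset. -/
noncomputable def indepNum {V : Type*} (G : SimpleGraph V) : ℕ :=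
  sSup {n | ∃ s : Finset V, IsIndepFinset G s ∧ s.card = n}

/-- The closed neighborhood of a vertex, as a finset. -/
def closedNbhd {V : Type*} [Fintype V] [DecidableEq V] (G : SimpleGraph V)
    [DecidableRel G.Adj] (v : V) : Finset V :=
  insert v (G.neighborFinset v)

theorem stmt_2 {V : Type*} [Fintype V] [DecidableEq V] (G : SimpleGraph V)
    [DecidableRel G.Adj] (Δ : ℕ) (hΔ : 1 ≤ Δ)
    (hdeg : ∀ v : V, G.degree v ≤ Δ)
    (K : Finset V) (hK : G.IsNClique Δ K)
    (u' v' : V) (hu' : u' ∉ K) (hv' : v' ∉ K) (hne : u' ≠ v') (huv : ¬ G.Adj u' v')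
    (hu'K : ∃ w ∈ K, G.Adj u' w) (hv'K : ∃ w ∈ K, G.Adj v' w) :
    _root_.indepNum ((G.induce ((↑K : Set V)ᶜ)) ⊔
      SimpleGraph.fromEdgeSet
        {s((⟨u', by simpa using hu'⟩ : ((↑K : Set V)ᶜ : Set V)),
           (⟨v', by simpa using hv'⟩ : ((↑K : Set V)ᶜ : Set V)))}) + 1 ≤ _root_.indepNum G := by
  classical
  set G0 : SimpleGraph ((↑K : Set V)ᶜ : Set V) :=
    (G.induce ((↑K : Set V)ᶜ)) ⊔
      SimpleGraph.fromEdgeSet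
        {s((⟨u', by simpa using hu'⟩ : ((↑K : Set V)ᶜ : Set V)),
           (⟨v', by simpa using hv'⟩ : ((↑K : Set V)ᶜ : Set V)))} with hG0
  -- each vertex of K has at most one neighbor outside K
  have uniq : ∀ k ∈ K, ∀ a b : V, a ∉ K → b ∉ K → G.Adj k a → G.Adj k b → a = b := by
    intro k hk a b ha hb hka hkb
    by_contra hab
    have hsub : insert a (insert b (K.erase k)) ⊆ G.neighborFinset k := by
      intro x hx
      simp only [Finset.mem_insert, Finset.mem_erase] at hx
      rw [SimpleGraph.mem_neighborFinset]
      rcases hx with rfl | rfl | ⟨hxk, hxK⟩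
      · exact hka
      · exact hkb
      · exact hK.1 (Finset.mem_coe.mpr hk) (Finset.mem_coe.mpr hxK) (Ne.symm hxk)
    have hcard : (insert a (insert b (K.erase k))).card = Δ + 1 := by
      rw [Finset.card_insert_of_notMem (by simp [ha, hab]),
        Finset.card_insert_of_notMem (by simp [hb]),
        Finset.card_erase_of_mem hk, hK.2]
      omega
    have h1 := Finset.card_le_card hsub
    have h2 := hdeg k
    have h3 : G.degree k = (G.neighborFinset k).card := rfl
    omega
  -- key: extend any independent set of G0 by a vertex of K
  have key : ∀ S : Finset ((↑K : Set V)ᶜ : Set V), IsIndepFinset G0 S →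
      ∃ T : Finset V, IsIndepFinset G T ∧ T.card = S.card + 1 := by
    intro S hS
    have hkey : ∃ k ∈ K, ∀ s ∈ S, ¬ G.Adj k (s : V) := by
      by_contra h
      push_neg at h
      obtain ⟨w, hwK, hwu⟩ := hu'K
      obtain ⟨w2, hw2K, hw2v⟩ := hv'K
      obtain ⟨s, hsS, hws⟩ := h w hwK
      obtain ⟨t, htS, hwt⟩ := h w2 hw2K
      have hs : (s : V) = u' := uniq w hwK _ _ (fun hm => s.2 (Finset.mem_coe.mpr hm)) hu' hws hwu.symm
      have ht : (t : V) = v' := uniq w2 hw2K _ _ (fun hm => t.2 (Finset.mem_coe.mpr hm)) hv' hwt hw2v.symm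
      have hst : s ≠ t := by
        intro hEq
        rw [hEq, ht] at hs
        exact hne hs.symm
      have hadj : G0.Adj s t := by
        rw [hG0, SimpleGraph.sup_adj]
        right
        rw [SimpleGraph.fromEdgeSet_adj]
        have hs' : s = (⟨u', by simpa using hu'⟩ : ((↑K : Set V)ᶜ : Set V)) := Subtype.ext hs
        have ht' : t = (⟨v', by simpa using hv'⟩ : ((↑K : Set V)ᶜ : Set V)) := Subtype.ext ht
        refine ⟨?_, hst⟩
        rw [hs', ht']
        rfl
      exact hS s hsS t htS hst hadj
    obtain ⟨k, hkK, hkS⟩ := hkey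
    have hknotmem : k ∉ S.image Subtype.val := by
      intro hk
      obtain ⟨s, _, hsk⟩ := Finset.mem_image.mp hk
      have := s.2
      rw [hsk] at this
      simp at this
      exact this hkK
    refine ⟨insert k (S.image Subtype.val), ?_, ?_⟩
    · intro x hx y hy hxy
      simp only [Finset.mem_insert, Finset.mem_image] at hx hy
      rcases hx with rfl | ⟨sx, hsx, rfl⟩
      · rcases hy with rfl | ⟨sy, hsy, rfl⟩
        · exact absurd rfl hxy
        · exact hkS sy hsy
      · rcases hy with rfl | ⟨sy, hsy, rfl⟩
        · intro hadj
          exact hkS sx hsx hadj.symm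
        · intro hadj
          have hsxy : sx ≠ sy := fun hEq => hxy (by rw [hEq])
          refine hS sx hsx sy hsy hsxy ?_
          rw [hG0, SimpleGraph.sup_adj]
          left
          exact hadj
    · rw [Finset.card_insert_of_notMem hknotmem,
        Finset.card_image_of_injective _ Subtype.val_injective]
  -- sSup bookkeeping
  have bddG : BddAbove {n | ∃ s : Finset V, IsIndepFinset G s ∧ s.card = n} := by
    refine ⟨Fintype.card V, ?_⟩
    rintro n ⟨s, -, rfl⟩
    exact (Finset.card_le_univ s).trans_eq (Finset.card_univ)
  have bddG0 : BddAbove {n | ∃ s : Finset ((↑K : Set V)ᶜ : Set V),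
      IsIndepFinset G0 s ∧ s.card = n} := by
    refine ⟨Fintype.card V, ?_⟩
    rintro n ⟨s, -, rfl⟩
    rw [← Finset.card_image_of_injective s Subtype.val_injective]
    exact (Finset.card_le_univ _).trans_eq (Finset.card_univ)
  have hne0 : {n | ∃ s : Finset ((↑K : Set V)ᶜ : Set V),
      IsIndepFinset G0 s ∧ s.card = n}.Nonempty := by
    exact ⟨0, ∅, fun v hv => absurd hv (by simp), rfl⟩
  have hmem := Nat.sSup_mem hne0 bddG0
  obtain ⟨S, hSind, hScard⟩ := hmem
  obtain ⟨T, hTind, hTcard⟩ := key S hSind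
  have h1 : _root_.indepNum G0 + 1 = T.card := by
    rw [hTcard, hScard]
    rfl
  rw [show _root_.indepNum (G.induce ((↑K : Set V)ᶜ) ⊔
      SimpleGraph.fromEdgeSet
        {s((⟨u', by simpa using hu'⟩ : ((↑K : Set V)ᶜ : Set V)),
           (⟨v', by simpa using hv'⟩ : ((↑K : Set V)ᶜ : Set V)))}) = _root_.indepNum G0 from rfl, h1]
  exact le_csSup bddG ⟨T, hTind, rfl⟩
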